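/- Let H be an n×n real symmetric matrix, g ∈ ℝⁿ and λ ∈ ℝ be such that H + λI is invertible, and set s = −(H + λI)⁻¹g. Suppose every eigenvalue of (H + λI)⁻² lies in the interval [θ_min, θ_max] with 0 < θ_min ≤ θ_max, and let ρ̂ ≥ 0 be a real number satisfying θ̂_min‖g‖² ≤ ρ̂² ≤ θ̂_max‖g‖² with 0 < θ̂_min ≤ θ̂_max. Then θ_min‖g‖² ≤ ‖s‖² ≤ θ_max‖g‖² and, consequently, (θ_min/θ̂_max)·ρ̂² ≤ ‖s‖² ≤ (θ_max/θ̂_min)·ρ̂². -/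

import Mathlib

open Matrix

/-- If `s = -(H + λI)⁻¹g`, every eigenvalue of `(H + λI)⁻²` lies in `[θ_min, θ_max]`,
and `θ̂_min‖g‖² ≤ ρ̂² ≤ θ̂_max‖g‖²`, then `θ_min‖g‖² ≤ ‖s‖² ≤ θ_max‖g‖²` and
`(θ_min/θ̂_max)ρ̂² ≤ ‖s‖² ≤ (θ_max/θ̂_min)ρ̂²`. -/
theorem step_norm_bounds
    (n : ℕ) (H : Matrix (Fin n) (Fin n) ℝ) (hH : H.IsSymm)
    (g : EuclideanSpace ℝ (Fin n)) (lam : ℝ)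
    (hinv : IsUnit (H + lam • (1 : Matrix (Fin n) (Fin n) ℝ)))
    (s : EuclideanSpace ℝ (Fin n))
    (hs : s = -((H + lam • (1 : Matrix (Fin n) (Fin n) ℝ))⁻¹.mulVec g))
    (θ_min θ_max : ℝ) (hθmin : 0 < θ_min) (hθ : θ_min ≤ θ_max)
    (heig : ∀ μ : ℝ,
      (∃ v : EuclideanSpace ℝ (Fin n), v ≠ 0 ∧
        (((H + lam • (1 : Matrix (Fin n) (Fin n) ℝ))⁻¹) ^ 2).mulVec v = μ • v) →
      θ_min ≤ μ ∧ μ ≤ θ_max)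
    (θh_min θh_max : ℝ) (hθhmin : 0 < θh_min) (hθh : θh_min ≤ θh_max)
    (ρh : ℝ) (hρh : 0 ≤ ρh)
    (hρhlow : θh_min * ‖g‖ ^ 2 ≤ ρh ^ 2) (hρhup : ρh ^ 2 ≤ θh_max * ‖g‖ ^ 2) :
    (θ_min * ‖g‖ ^ 2 ≤ ‖s‖ ^ 2 ∧ ‖s‖ ^ 2 ≤ θ_max * ‖g‖ ^ 2) ∧
      (θ_min / θh_max) * ρh ^ 2 ≤ ‖s‖ ^ 2 ∧ ‖s‖ ^ 2 ≤ (θ_max / θh_min) * ρh ^ 2 := by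
  set A : Matrix (Fin n) (Fin n) ℝ := H + lam • 1 with hA
  set B : Matrix (Fin n) (Fin n) ℝ := A⁻¹ with hB
  set M : Matrix (Fin n) (Fin n) ℝ := B ^ 2 with hM
  have hBsymm : Bᵀ = B := by
    rw [hB, Matrix.transpose_nonsing_inv]
    congr 1
    rw [hA, Matrix.transpose_add, hH.eq, Matrix.transpose_smul, Matrix.transpose_one]
  have hMherm : M.IsHermitian := by
    rw [Matrix.IsHermitian, conjTranspose_eq_transpose_of_trivial, hM, sq,
      Matrix.transpose_mul, hBsymm]
  have hMT : Mᵀ = M := by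
    rw [← conjTranspose_eq_transpose_of_trivial]; exact hMherm.eq
  have eigshift : ∀ (N : Matrix (Fin n) (Fin n) ℝ) (hN : N.IsHermitian) (i : Fin n),
      ∃ v : EuclideanSpace ℝ (Fin n), v ≠ 0 ∧ N.mulVec v = hN.eigenvalues i • (v : Fin n → ℝ) := by
    intro N hN i
    exact ⟨hN.eigenvectorBasis i, hN.eigenvectorBasis.toBasis.ne_zero i,
      hN.mulVec_eigenvectorBasis i⟩
  have hlowPSD : (M - θ_min • 1).PosSemidef := by
    have hherm : (M - θ_min • (1 : Matrix (Fin n) (Fin n) ℝ)).IsHermitian := by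
      simp [Matrix.IsHermitian, conjTranspose_sub, conjTranspose_smul, hMT]
    refine hherm.posSemidef_iff_eigenvalues_nonneg.mpr fun i => show (0 : ℝ) ≤ _ from ?_
    obtain ⟨v, hv0, hv⟩ := eigshift _ hherm i
    rw [Matrix.sub_mulVec, Matrix.smul_mulVec, Matrix.one_mulVec] at hv
    have hMv : M.mulVec v = (hherm.eigenvalues i + θ_min) • (v : Fin n → ℝ) := by
      rw [add_smul, ← sub_eq_iff_eq_add] at *
      exact hv
    have := (heig _ ⟨v, hv0, hMv⟩).1
    linarith
  have hupPSD : (θ_max • 1 - M).PosSemidef := by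
    have hherm : (θ_max • (1 : Matrix (Fin n) (Fin n) ℝ) - M).IsHermitian := by
      simp [Matrix.IsHermitian, conjTranspose_sub, conjTranspose_smul, hMT]
    refine hherm.posSemidef_iff_eigenvalues_nonneg.mpr fun i => show (0 : ℝ) ≤ _ from ?_
    obtain ⟨v, hv0, hv⟩ := eigshift _ hherm i
    rw [Matrix.sub_mulVec, Matrix.smul_mulVec, Matrix.one_mulVec] at hv
    have hMv : M.mulVec v = (θ_max - hherm.eigenvalues i) • (v : Fin n → ℝ) := by
      rw [sub_smul, ← sub_eq_iff_eq_add] at *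
      linear_combination (norm := module) -hv
    have := (heig _ ⟨v, hv0, hMv⟩).2
    linarith
  have hnormg : ‖g‖ ^ 2 = (g : Fin n → ℝ) ⬝ᵥ (g : Fin n → ℝ) := by
    rw [EuclideanSpace.norm_sq_eq]
    simp [dotProduct, sq]
  have hnorms : ‖s‖ ^ 2 = (g : Fin n → ℝ) ⬝ᵥ (M.mulVec g) := by
    have h1 : ‖s‖ ^ 2 = (B.mulVec g) ⬝ᵥ (B.mulVec g) := by
      rw [EuclideanSpace.norm_sq_eq]
      simp [hs, dotProduct, sq]
    rw [h1, hM, sq, ← Matrix.mulVec_mulVec, Matrix.dotProduct_mulVec g,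
      ← Matrix.mulVec_transpose, hBsymm]
  have hlow : θ_min * ‖g‖ ^ 2 ≤ ‖s‖ ^ 2 := by
    have := hlowPSD.dotProduct_mulVec_nonneg g.ofLp
    simp only [star_trivial, Matrix.sub_mulVec, Matrix.smul_mulVec, Matrix.one_mulVec,
      dotProduct_sub, dotProduct_smul, smul_eq_mul] at this
    rw [hnorms, hnormg]; linarith
  have hup : ‖s‖ ^ 2 ≤ θ_max * ‖g‖ ^ 2 := by
    have := hupPSD.dotProduct_mulVec_nonneg g.ofLp
    simp only [star_trivial, Matrix.sub_mulVec, Matrix.smul_mulVec, Matrix.one_mulVec,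
      dotProduct_sub, dotProduct_smul, smul_eq_mul] at this
    rw [hnorms, hnormg]; linarith
  have hθhmax : 0 < θh_max := lt_of_lt_of_le hθhmin hθh
  refine ⟨⟨hlow, hup⟩, ?_, ?_⟩
  · rw [div_mul_eq_mul_div, div_le_iff₀ hθhmax]
    nlinarith [sq_nonneg ‖g‖]
  · rw [div_mul_eq_mul_div, le_div_iff₀ hθhmin]
    nlinarith [sq_nonneg ‖g‖]
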